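/- There exist a finite set of alternatives 𝒜 (one may take |𝒜| = 3), a utility function u : 𝒜 × ℝ → ℝ with z ↦ u(a, z) continuous and strictly decreasing for each a ∈ 𝒜, and a quasi-linear utility function u^QL : 𝒜 × ℝ → ℝ, such that u(a, z) = u^QL(a, z) whenever u^QL(a, z) ≥ 0 (so that u^QL pos-represents the preference induced by u), yet u is not a parallel utility function. -/

import Mathlib

def QuasiLinear {𝒜 : Type*} (u : 𝒜 × ℝ → ℝ) : Prop :=
  ∃ v : 𝒜 → ℝ, ∀ (a : 𝒜) (z : ℝ), u (a, z) = v a - z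

/-- `u` pos-represents the preference `R` on `𝒜 × ℝ`. -/
def PosRepresents {𝒜 : Type*} (u : 𝒜 × ℝ → ℝ) (R : 𝒜 × ℝ → 𝒜 × ℝ → Prop) : Prop :=
  ∀ (a b : 𝒜) (za zb : ℝ), (0 ≤ u (a, za) ∨ 0 ≤ u (b, zb)) →
    (R (a, za) (b, zb) ↔ u (b, zb) ≤ u (a, za))

/-- `min_{a' ∈ 𝒜} u (a', 0)`. -/
noncomputable def minAtZero {𝒜 : Type*} [Fintype 𝒜] [Nonempty 𝒜] (u : 𝒜 × ℝ → ℝ) : ℝ :=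
  Finset.univ.inf' Finset.univ_nonempty (fun a => u (a, 0))

/-- Parallel utility functions (Ma et al.). -/
def Parallel {𝒜 : Type*} [Fintype 𝒜] [Nonempty 𝒜] (u : 𝒜 × ℝ → ℝ) : Prop :=
  (∀ a : 𝒜, Continuous fun z => u (a, z)) ∧
  (∀ a : 𝒜, StrictAnti fun z => u (a, z)) ∧
  (∀ a : 𝒜, ∃ L : EReal, Filter.Tendsto (fun z => ((u (a, z) : ℝ) : EReal))
      Filter.atTop (nhds L) ∧ L < ((minAtZero u : ℝ) : EReal)) ∧
  (∀ a b : 𝒜, u (b, 0) ≤ u (a, 0) →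
    ∀ ta tb : ℝ, u (a, ta) = minAtZero u → u (b, tb) = minAtZero u →
      ∀ z : ℝ, 0 ≤ z → minAtZero u ≤ u (b, z) → u (a, z + (ta - tb)) = u (b, z))

noncomputable def myU : Fin 3 × ℝ → ℝ := fun p =>
  ![-1 - p.2, 2 - p.2, max (1 - p.2) ((1 - p.2) / 2)] p.1

noncomputable def myV : Fin 3 → ℝ := ![-1, 2, 1]

noncomputable def myUQL : Fin 3 × ℝ → ℝ := fun p => myV p.1 - p.2

lemma eq_on_nonneg : ∀ (a : Fin 3) (z : ℝ), 0 ≤ myUQL (a, z) → myU (a, z) = myUQL (a, z) := by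
  intro a z h
  fin_cases a <;> simp_all [myU, myUQL, myV] <;> linarith

lemma neg_of_neg : ∀ (a : Fin 3) (z : ℝ), myUQL (a, z) < 0 → myU (a, z) < 0 := by
  intro a z h
  fin_cases a <;> simp_all [myU, myUQL, myV] <;> linarith

lemma min_eq : minAtZero myU = -1 := by
  apply le_antisymm
  · exact le_trans (Finset.inf'_le _ (Finset.mem_univ (0 : Fin 3))) (by norm_num [myU])
  · apply Finset.le_inf'
    intro a _
    fin_cases a <;> norm_num [myU]

theorem stmt19 :
    ∃ (u uQL : Fin 3 × ℝ → ℝ),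
      (∀ a : Fin 3, Continuous fun z => u (a, z)) ∧
      (∀ a : Fin 3, StrictAnti fun z => u (a, z)) ∧
      QuasiLinear uQL ∧
      (∀ (a : Fin 3) (z : ℝ), 0 ≤ uQL (a, z) → u (a, z) = uQL (a, z)) ∧
      PosRepresents uQL (fun p q => u q ≤ u p) ∧
      ¬ Parallel u := by
  refine ⟨myU, myUQL, ?_, ?_, ⟨myV, fun a z => rfl⟩, eq_on_nonneg, ?_, ?_⟩
  · intro a
    fin_cases a <;> simp only [myU] <;> norm_num
    · fun_prop
    · fun_prop
    · exact Continuous.max (by fun_prop) (by fun_prop)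
  · intro a
    have h1 : StrictAnti fun z : ℝ => -1 - z := fun x y h => by simpa using h
    have h2 : StrictAnti fun z : ℝ => 2 - z := fun x y h => by simpa using h
    have h3 : StrictAnti fun z : ℝ => max (1 - z) ((1 - z) / 2) :=
      fun x y h => max_lt_max (by linarith) (by linarith)
    fin_cases a <;> simp only [myU] <;> norm_num
    · exact h1
    · exact h2
    · exact h3
  · intro a b za zb h
    simp only
    rcases le_or_gt 0 (myUQL (a, za)) with ha | ha <;>
      rcases le_or_gt 0 (myUQL (b, zb)) with hb | hb
    · rw [eq_on_nonneg a za ha, eq_on_nonneg b zb hb]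
    · have := neg_of_neg b zb hb
      rw [eq_on_nonneg a za ha]
      constructor <;> intro <;> linarith
    · have := neg_of_neg a za ha
      rw [eq_on_nonneg b zb hb]
      constructor <;> intro <;> linarith
    · rcases h with h | h <;> linarith
  · rintro ⟨-, -, -, h4⟩
    have h1 : myU (1, 3) = minAtZero myU := by norm_num [myU, min_eq]
    have h2 : myU (2, 3) = minAtZero myU := by
      rw [min_eq]; norm_num [myU, Matrix.cons_val_two, Matrix.tail_cons, Matrix.head_cons]
    have hle : myU (2, 0) ≤ myU (1, 0) := by norm_num [myU, Matrix.cons_val_two, Matrix.tail_cons, Matrix.head_cons]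
    have := h4 1 2 hle 3 3 h1 h2 2 (by norm_num)
      (by rw [min_eq]; norm_num [myU, Matrix.cons_val_two, Matrix.tail_cons, Matrix.head_cons])
    norm_num [myU, Matrix.cons_val_two, Matrix.tail_cons, Matrix.head_cons] at this
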